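/- Let a, b, μ ∈ ℂ with |μ| = 1 and |a| + |b| = 1, and define f(z,w) = μ (az + bw − zw)/(1 − b̄z − āw) for (z,w) ∈ 𝔻². Then f is a well-defined holomorphic map from 𝔻² to 𝔻 with f(0,0) = 0, and f is everywhere infinitesimally extremal: for every (z,w) ∈ 𝔻², 1 − |f(z,w)|² = (1 − |z|²)|f₁(z,w)| + (1 − |w|²)|f₂(z,w)|. -/

import Mathlib

lemma norm_sq_ofReal (x : ℂ) : ((‖x‖^2 : ℝ) : ℂ) = x * (starRingEnd ℂ) x := by
  rw [Complex.mul_conj]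
  norm_cast
  rw [Complex.normSq_eq_norm_sq]



/-- The open unit bidisk in `ℂ²`. -/
def bidisk : Set (ℂ × ℂ) := {p | ‖p.1‖ < 1 ∧ ‖p.2‖ < 1}

/-- The Möbius map `ζ ↦ λ (ζ - a) / (1 - conj a ⬝ ζ)`. -/
noncomputable def mobius (l a : ℂ) (z : ℂ) : ℂ :=
  l * (z - a) / (1 - (starRingEnd ℂ) a * z)

/-- `φ` is an automorphism of the unit disk: on the disk it agrees with a Möbius map
`ζ ↦ λ (ζ - a)/(1 - conj a ⬝ ζ)` with `|λ| = 1` and `|a| < 1`. -/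
def IsDiskAut (φ : ℂ → ℂ) : Prop :=
  ∃ l a : ℂ, ‖l‖ = 1 ∧ ‖a‖ < 1 ∧ ∀ z : ℂ, ‖z‖ < 1 → φ z = mobius l a z

/-- A balanced disk in the bidisk: the image of the unit disk under `ζ ↦ (φ₁ ζ, φ₂ ζ)` for
automorphisms `φ₁, φ₂` of the disk. -/
def IsBalancedDisk (D : Set (ℂ × ℂ)) : Prop :=
  ∃ φ₁ φ₂ : ℂ → ℂ, IsDiskAut φ₁ ∧ IsDiskAut φ₂ ∧
    D = {p : ℂ × ℂ | ∃ ζ : ℂ, ‖ζ‖ < 1 ∧ p = (φ₁ ζ, φ₂ ζ)}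

/-- An extreme disk for `f`: a balanced disk on which the restriction of `f` is an
automorphism of the disk. -/
def IsExtremeDisk (f : ℂ × ℂ → ℂ) (D : Set (ℂ × ℂ)) : Prop :=
  ∃ φ₁ φ₂ : ℂ → ℂ, IsDiskAut φ₁ ∧ IsDiskAut φ₂ ∧
    D = {p : ℂ × ℂ | ∃ ζ : ℂ, ‖ζ‖ < 1 ∧ p = (φ₁ ζ, φ₂ ζ)} ∧
    IsDiskAut (fun ζ => f (φ₁ ζ, φ₂ ζ))

/-- The extreme set `X(f)` of `f : 𝔻² → 𝔻`: the points of the bidisk at which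
`1 - |f(z,w)|² = (1 - |z|²)|f₁(z,w)| + (1 - |w|²)|f₂(z,w)|`. -/
def extremeSet (f : ℂ × ℂ → ℂ) : Set (ℂ × ℂ) :=
  {p ∈ bidisk | 1 - ‖f p‖ ^ 2 =
    (1 - ‖p.1‖ ^ 2) * ‖fderiv ℂ f p (1, 0)‖ + (1 - ‖p.2‖ ^ 2) * ‖fderiv ℂ f p (0, 1)‖}

set_option maxHeartbeats 2000000 in
/-- For `|μ| = 1` and `|a| + |b| = 1`, the function
`f(z,w) = μ (az + bw - zw)/(1 - conj b ⬝ z - conj a ⬝ w)` is a well-defined holomorphic map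
from the bidisk to the disk with `f(0,0) = 0` which is everywhere infinitesimally extremal. -/
theorem explicit_extremal_function (a b μ : ℂ) (hμ : ‖μ‖ = 1) (hab : ‖a‖ + ‖b‖ = 1)
    (f : ℂ × ℂ → ℂ)
    (hfdef : ∀ p : ℂ × ℂ, f p = μ * (a * p.1 + b * p.2 - p.1 * p.2) /
      (1 - (starRingEnd ℂ) b * p.1 - (starRingEnd ℂ) a * p.2)) :
    (∀ p ∈ bidisk, 1 - (starRingEnd ℂ) b * p.1 - (starRingEnd ℂ) a * p.2 ≠ 0) ∧
    DifferentiableOn ℂ f bidisk ∧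
    (∀ p ∈ bidisk, ‖f p‖ < 1) ∧
    f (0, 0) = 0 ∧
    ∀ p ∈ bidisk, 1 - ‖f p‖ ^ 2 =
      (1 - ‖p.1‖ ^ 2) * ‖fderiv ℂ f p (1, 0)‖ +
      (1 - ‖p.2‖ ^ 2) * ‖fderiv ℂ f p (0, 1)‖ := by
  obtain ⟨s, rfl⟩ : ∃ s : ℂ, s ^ 2 = a := IsAlgClosed.exists_pow_nat_eq a two_pos
  obtain ⟨t, rfl⟩ : ∃ t : ℂ, t ^ 2 = b := IsAlgClosed.exists_pow_nat_eq b two_pos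
  have main : ∀ p : ℂ × ℂ, ‖p.1‖ < 1 → ‖p.2‖ < 1 →
      (1 - (starRingEnd ℂ) (t^2) * p.1 - (starRingEnd ℂ) (s^2) * p.2 ≠ 0) ∧
      DifferentiableAt ℂ f p ∧ ‖f p‖ < 1 ∧
      (1 - ‖f p‖ ^ 2 =
        (1 - ‖p.1‖ ^ 2) * ‖fderiv ℂ f p (1, 0)‖ +
        (1 - ‖p.2‖ ^ 2) * ‖fderiv ℂ f p (0, 1)‖) := by
    have hab' : ‖s‖^2 + ‖t‖^2 = 1 := by simpa [norm_pow] using hab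
    have hst : s * (starRingEnd ℂ) s + t * (starRingEnd ℂ) t = 1 := by
      rw [← norm_sq_ofReal, ← norm_sq_ofReal]
      norm_cast
    rintro ⟨z, w⟩ hz hw
    simp only at hz hw ⊢
    set cs := (starRingEnd ℂ) s with hcs
    set ct := (starRingEnd ℂ) t with hct
    -- denominator
    set Dv : ℂ := 1 - (starRingEnd ℂ) (t^2) * z - (starRingEnd ℂ) (s^2) * w with hDv
    set Nv : ℂ := s^2 * z + t^2 * w - z * w with hNv
    have hDne : Dv ≠ 0 := by
      intro h
      have h1 : (1:ℂ) = (starRingEnd ℂ) (t^2) * z + (starRingEnd ℂ) (s^2) * w := by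
        rw [hDv] at h; linear_combination h
      have h2 : (1:ℝ) ≤ ‖(starRingEnd ℂ) (t^2) * z + (starRingEnd ℂ) (s^2) * w‖ := by
        rw [← h1]; simp
      have h3 : ‖(starRingEnd ℂ) (t^2) * z + (starRingEnd ℂ) (s^2) * w‖ ≤
          ‖t‖^2 * ‖z‖ + ‖s‖^2 * ‖w‖ := by
        refine le_trans (norm_add_le _ _) ?_
        simp [norm_pow]
      have hs0 : (0:ℝ) ≤ ‖s‖^2 := sq_nonneg _
      have ht0 : (0:ℝ) ≤ ‖t‖^2 := sq_nonneg _
      have hcase : 0 < ‖s‖^2 ∨ 0 < ‖t‖^2 := by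
        by_contra hc; push_neg at hc; nlinarith
      rcases hcase with hh | hh
      · nlinarith [mul_le_of_le_one_right ht0 hz.le, mul_lt_mul_of_pos_left hw hh,
          mul_nonneg ht0 (norm_nonneg z)]
      · nlinarith [mul_le_of_le_one_right hs0 hw.le, mul_lt_mul_of_pos_left hz hh,
          mul_nonneg hs0 (norm_nonneg w)]
    -- the key norm identity
    set E1 : ℂ := s - cs * w with hE1
    set E2 : ℂ := t - ct * z with hE2
    have hkey : ‖Dv‖^2 - ‖Nv‖^2 = (1 - ‖z‖^2) * ‖E1‖^2 + (1 - ‖w‖^2) * ‖E2‖^2 := by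
      have hC : ((‖Dv‖^2 - ‖Nv‖^2 : ℝ) : ℂ) =
          (((1 - ‖z‖^2) * ‖E1‖^2 + (1 - ‖w‖^2) * ‖E2‖^2 : ℝ) : ℂ) := by
        simp only [Complex.ofReal_sub, Complex.ofReal_add, Complex.ofReal_mul,
          Complex.ofReal_one, norm_sq_ofReal]
        simp only [hDv, hNv, hE1, hE2, hcs, hct, map_sub, map_add, map_mul, map_one,
          map_pow, Complex.conj_conj]
        set Z := (starRingEnd ℂ) z
        set W := (starRingEnd ℂ) w
        linear_combination (-1 + z*Z*w*W - t*(starRingEnd ℂ) t*w*W + t*(starRingEnd ℂ) t*z*Z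
          + s*(starRingEnd ℂ) s*w*W - s*(starRingEnd ℂ) s*z*Z) * hst
      exact_mod_cast hC
    -- strict positivity of the right side
    have hz2 : ‖z‖^2 < 1 := by nlinarith [norm_nonneg z]
    have hw2 : ‖w‖^2 < 1 := by nlinarith [norm_nonneg w]
    have hpos : 0 < (1 - ‖z‖^2) * ‖E1‖^2 + (1 - ‖w‖^2) * ‖E2‖^2 := by
      have hne : E1 ≠ 0 ∨ E2 ≠ 0 := by
        by_contra h
        push_neg at h
        obtain ⟨h1, h2⟩ := h
        have hs0 : s = 0 := by
          have heq : ‖s‖ = ‖s‖ * ‖w‖ := by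
            have hh : s = cs * w := by rw [hE1] at h1; linear_combination h1
            conv_lhs => rw [hh]
            rw [norm_mul, hcs, RCLike.norm_conj]
          have hsn : ‖s‖ = 0 := by nlinarith [norm_nonneg s]
          exact norm_eq_zero.mp hsn
        have htn : ‖t‖^2 = 1 := by rw [hs0] at hab'; simpa using hab'
        have ht1 : ‖t‖ = 1 := by nlinarith [norm_nonneg t, sq_nonneg (‖t‖ - 1), sq_nonneg (‖t‖ + 1)]
        have heq : ‖t‖ = ‖t‖ * ‖z‖ := by
          have hh : t = ct * z := by rw [hE2] at h2; linear_combination h2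
          conv_lhs => rw [hh]
          rw [norm_mul, hct, RCLike.norm_conj]
        rw [ht1] at heq
        nlinarith
      rcases hne with h | h
      · have : 0 < ‖E1‖^2 := pow_pos (norm_pos_iff.mpr h) 2
        nlinarith [sq_nonneg ‖E2‖]
      · have : 0 < ‖E2‖^2 := pow_pos (norm_pos_iff.mpr h) 2
        nlinarith [sq_nonneg ‖E1‖]
    have hDnorm : 0 < ‖Dv‖ := norm_pos_iff.mpr hDne
    -- differentiability
    have hdiff : DifferentiableAt ℂ f (z, w) := by
      have hfe : f = fun q : ℂ × ℂ => μ * (s^2 * q.1 + t^2 * q.2 - q.1 * q.2) /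
          (1 - (starRingEnd ℂ) (t^2) * q.1 - (starRingEnd ℂ) (s^2) * q.2) := funext hfdef
      rw [hfe]
      simp only [div_eq_mul_inv]
      have h1 : DifferentiableAt ℂ
          (fun q : ℂ × ℂ => μ * (s^2 * q.1 + t^2 * q.2 - q.1 * q.2)) (z, w) :=
        (((differentiableAt_fst.const_mul (s^2)).add
          (differentiableAt_snd.const_mul (t^2))).sub
          (differentiableAt_fst.mul differentiableAt_snd)).const_mul μ
      have h2 : DifferentiableAt ℂ
          (fun q : ℂ × ℂ => 1 - (starRingEnd ℂ) (t^2) * q.1 - (starRingEnd ℂ) (s^2) * q.2)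
          (z, w) :=
        ((differentiableAt_const (1:ℂ)).sub
          (differentiableAt_fst.const_mul ((starRingEnd ℂ) (t^2)))).sub
          (differentiableAt_snd.const_mul ((starRingEnd ℂ) (s^2)))
      exact h1.mul (h2.inv hDne)
    -- first partial derivative
    have hline1 : HasDerivAt (fun ζ : ℂ => (ζ, w)) ((1:ℂ), (0:ℂ)) z :=
      (hasDerivAt_id' z).prodMk (hasDerivAt_const z w)
    have hcomp1 : HasDerivAt (fun ζ : ℂ => f (ζ, w)) (fderiv ℂ f (z, w) (1, 0)) z :=
      hdiff.hasFDerivAt.comp_hasDerivAt z hline1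
    have hnum1 : HasDerivAt (fun ζ : ℂ => μ * (s^2 * ζ + t^2 * w - ζ * w))
        (μ * (s^2 - w)) z := by
      have h := ((((hasDerivAt_id z).const_mul (s^2)).add_const (t^2*w)).sub
        ((hasDerivAt_id z).mul_const w)).const_mul μ
      exact h.congr_deriv (by ring)
    have hden1 : HasDerivAt (fun ζ : ℂ => 1 - (starRingEnd ℂ) (t^2) * ζ - (starRingEnd ℂ) (s^2) * w)
        (-(starRingEnd ℂ) (t^2)) z := by
      have h := (((hasDerivAt_const z (1:ℂ)).sub
        ((hasDerivAt_id z).const_mul ((starRingEnd ℂ) (t^2)))).sub_const ((starRingEnd ℂ) (s^2)*w))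
      exact h.congr_deriv (by ring)
    have hslice1 : HasDerivAt (fun ζ : ℂ => f (ζ, w))
        ((μ * (s^2 - w) * Dv - μ * Nv * (-(starRingEnd ℂ) (t^2))) / Dv^2) z := by
      have h := hnum1.div hden1 (by rw [hDv] at hDne; exact hDne)
      have he : (fun ζ : ℂ => f (ζ, w)) =ᶠ[nhds z]
          (fun ζ : ℂ => μ * (s^2 * ζ + t^2 * w - ζ * w) /
            (1 - (starRingEnd ℂ) (t^2) * ζ - (starRingEnd ℂ) (s^2) * w)) :=
        Filter.Eventually.of_forall fun ζ => by simpa using hfdef (ζ, w)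
      have := h.congr_of_eventuallyEq he
      convert this using 1
      all_goals (rw [hDv, hNv]; ring)
    have hval1 : fderiv ℂ f (z, w) (1, 0) = μ * E1^2 / Dv^2 := by
      have hu := hcomp1.unique hslice1
      have hn1 : μ * (s^2 - w) * Dv + μ * Nv * (starRingEnd ℂ) (t^2) = μ * E1^2 := by
        simp only [hDv, hNv, hE1, hcs, map_pow]
        linear_combination (μ*w + μ*t*(starRingEnd ℂ) t*w - μ*s*(starRingEnd ℂ) s*w) * hst
      rw [hu, ← hn1]
      ring
    -- second partial derivative
    have hline2 : HasDerivAt (fun ζ : ℂ => (z, ζ)) ((0:ℂ), (1:ℂ)) w :=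
      (hasDerivAt_const w z).prodMk (hasDerivAt_id' w)
    have hcomp2 : HasDerivAt (fun ζ : ℂ => f (z, ζ)) (fderiv ℂ f (z, w) (0, 1)) w :=
      hdiff.hasFDerivAt.comp_hasDerivAt w hline2
    have hnum2 : HasDerivAt (fun ζ : ℂ => μ * (s^2 * z + t^2 * ζ - z * ζ))
        (μ * (t^2 - z)) w := by
      have h := ((((hasDerivAt_id w).const_mul (t^2)).const_add (s^2*z)).sub
        ((hasDerivAt_id w).const_mul z)).const_mul μ
      exact h.congr_deriv (by ring)
    have hden2 : HasDerivAt (fun ζ : ℂ => 1 - (starRingEnd ℂ) (t^2) * z - (starRingEnd ℂ) (s^2) * ζ)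
        (-(starRingEnd ℂ) (s^2)) w := by
      have h := ((hasDerivAt_const w ((1:ℂ) - (starRingEnd ℂ) (t^2) * z)).sub
        ((hasDerivAt_id w).const_mul ((starRingEnd ℂ) (s^2))))
      exact h.congr_deriv (by ring)
    have hslice2 : HasDerivAt (fun ζ : ℂ => f (z, ζ))
        ((μ * (t^2 - z) * Dv - μ * Nv * (-(starRingEnd ℂ) (s^2))) / Dv^2) w := by
      have h := hnum2.div hden2 (by rw [hDv] at hDne; exact hDne)
      have he : (fun ζ : ℂ => f (z, ζ)) =ᶠ[nhds w]
          (fun ζ : ℂ => μ * (s^2 * z + t^2 * ζ - z * ζ) /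
            (1 - (starRingEnd ℂ) (t^2) * z - (starRingEnd ℂ) (s^2) * ζ)) :=
        Filter.Eventually.of_forall fun ζ => by simpa using hfdef (z, ζ)
      have := h.congr_of_eventuallyEq he
      convert this using 1
      all_goals (rw [hDv, hNv]; ring)
    have hval2 : fderiv ℂ f (z, w) (0, 1) = μ * E2^2 / Dv^2 := by
      have hu := hcomp2.unique hslice2
      have hn2 : μ * (t^2 - z) * Dv + μ * Nv * (starRingEnd ℂ) (s^2) = μ * E2^2 := by
        simp only [hDv, hNv, hE2, hct, map_pow]
        linear_combination (μ*z - μ*t*(starRingEnd ℂ) t*z + μ*s*(starRingEnd ℂ) s*z) * hst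
      rw [hu, ← hn2]
      ring
    -- norm of f
    have hfval : f (z, w) = μ * Nv / Dv := by
      rw [hfdef (z, w)]
    have hfn : ‖f (z, w)‖ = ‖Nv‖ / ‖Dv‖ := by
      rw [hfval, norm_div, norm_mul, hμ, one_mul]
    have hlt : ‖f (z, w)‖ < 1 := by
      rw [hfn, div_lt_one hDnorm]
      nlinarith [norm_nonneg Nv, norm_nonneg Dv]
    refine ⟨hDne, hdiff, hlt, ?_⟩
    have hn1norm : ‖fderiv ℂ f (z, w) (1, 0)‖ = ‖E1‖^2 / ‖Dv‖^2 := by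
      rw [hval1, norm_div, norm_mul, hμ, one_mul, norm_pow, norm_pow]
    have hn2norm : ‖fderiv ℂ f (z, w) (0, 1)‖ = ‖E2‖^2 / ‖Dv‖^2 := by
      rw [hval2, norm_div, norm_mul, hμ, one_mul, norm_pow, norm_pow]
    rw [hfn, hn1norm, hn2norm, div_pow]
    have h2 : (‖Dv‖:ℝ)^2 ≠ 0 := by positivity
    rw [show (1:ℝ) - ‖Nv‖^2/‖Dv‖^2 = (‖Dv‖^2 - ‖Nv‖^2)/‖Dv‖^2 by
      rw [sub_div, div_self h2]]
    rw [hkey, add_div, mul_div_assoc, mul_div_assoc]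
  have hbid : ∀ p : ℂ × ℂ, p ∈ bidisk → ‖p.1‖ < 1 ∧ ‖p.2‖ < 1 := by
    intro p hp
    simpa [bidisk] using hp
  refine ⟨fun p hp => (main p (hbid p hp).1 (hbid p hp).2).1,
    fun p hp => (main p (hbid p hp).1 (hbid p hp).2).2.1.differentiableWithinAt,
    fun p hp => (main p (hbid p hp).1 (hbid p hp).2).2.2.1, ?_,
    fun p hp => (main p (hbid p hp).1 (hbid p hp).2).2.2.2⟩
  rw [hfdef (0, 0)]
  norm_num
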